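/- Let a ≥ 0, λ > 0, and suppose f ∈ H³(-1,0) satisfies f''' + (a - λ) f' = g with f(-1) = f(0) = f'(0) = 0, for some g ∈ L²(-1,0). Then λ · f'(-1)² / 2 = λ ∫_{-1}^0 f(x) g(x) dx. -/

import Mathlib

open MeasureTheory

theorem multiplier_identity_two (a lam : ℝ) (ha : 0 ≤ a) (hlam : 0 < lam)
    (f g : ℝ → ℝ) (hf : ContDiff ℝ 3 f) (hg : Continuous g)
    (heq : ∀ x ∈ Set.Icc (-1:ℝ) 0,
      iteratedDeriv 3 f x + (a - lam) * deriv f x = g x)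
    (hb1 : f (-1) = 0) (hb2 : f 0 = 0) (hb3 : deriv f 0 = 0) :
    lam * (deriv f (-1))^2 / 2 = lam * ∫ x in (-1:ℝ)..0, f x * g x := by
  have hf1 : ContDiff ℝ 2 (deriv f) := (contDiff_succ_iff_deriv.mp (show ContDiff ℝ (2+1) f from hf)).2.2
  have hf2 : ContDiff ℝ 1 (deriv (deriv f)) := (contDiff_succ_iff_deriv.mp (show ContDiff ℝ (1+1) (deriv f) from hf1)).2.2
  have hdf : ∀ x, HasDerivAt f (deriv f x) x :=
    fun x => (hf.differentiable (by norm_num)).differentiableAt.hasDerivAt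
  have hdf1 : ∀ x, HasDerivAt (deriv f) (deriv (deriv f) x) x :=
    fun x => (hf1.differentiable (by norm_num)).differentiableAt.hasDerivAt
  have hdf2 : ∀ x, HasDerivAt (deriv (deriv f)) (deriv (deriv (deriv f)) x) x :=
    fun x => (hf2.differentiable (by norm_num)).differentiableAt.hasDerivAt
  set F : ℝ → ℝ := fun x => f x * deriv (deriv f) x - (deriv f x)^2/2 + (a - lam) * ((f x)^2/2)
    with hF
  have hFd : ∀ x ∈ Set.Icc (-1:ℝ) 0, HasDerivAt F (f x * g x) x := by
    intro x hx
    have h1 := ((((hdf x).mul (hdf2 x)).sub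
        (((hdf1 x).pow 2).div_const 2)).add
        ((((hdf x).pow 2).div_const 2).const_mul (a - lam)))
    refine h1.congr_deriv ?_
    have := heq x hx
    rw [show iteratedDeriv 3 f x = deriv (deriv (deriv f)) x by
      simp [iteratedDeriv_succ, iteratedDeriv_zero]] at this
    rw [← this]
    push_cast
    ring
  have hcont : ContinuousOn (fun x => f x * g x) (Set.uIcc (-1:ℝ) 0) :=
    (hf.continuous.mul hg).continuousOn
  have hIcc : Set.uIcc (-1:ℝ) 0 = Set.Icc (-1:ℝ) 0 := by
    rw [Set.uIcc_of_le]; norm_num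
  have hint : ∫ x in (-1:ℝ)..0, f x * g x = F 0 - F (-1) := by
    apply intervalIntegral.integral_eq_sub_of_hasDerivAt
    · intro x hx
      exact hFd x (hIcc ▸ hx)
    · exact (hcont.intervalIntegrable)
  rw [hint]
  simp only [hF, hb1, hb2, hb3]
  ring
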